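/- For every M > 0 there exists c > 0 such that every ρ in the open probability simplex Δ° with I(ρ) ≤ M satisfies ρ_i ≥ c for all i ∈ V; i.e., sublevel sets of the discrete Fisher information within Δ° are uniformly bounded away from the boundary of the simplex. -/

import Mathlib

/-- The discrete Fisher information on a graph:
`I(ρ) = Σ_{{i,j} ∈ E} (log ρ_i − log ρ_j)² (ρ_i + ρ_j)/2`,
where the sum runs over the edges of the graph, each unordered edge counted once. -/
noncomputable def discreteFisher {V : Type*} [Fintype V] [DecidableEq V]
    (G : SimpleGraph V) [DecidableRel G.Adj] (ρ : V → ℝ) : ℝ :=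
  ∑ e ∈ G.edgeFinset,
    Sym2.lift ⟨fun i j => (Real.log (ρ i) - Real.log (ρ j)) ^ 2 * (ρ i + ρ j) / 2,
      fun i j => by ring⟩ e

/-- Recursive lower-bound sequence. -/
noncomputable def fisherAux (M a0 : ℝ) : ℕ → ℝ
  | 0 => a0
  | k + 1 => fisherAux M a0 k * Real.exp (-(Real.sqrt (2 * M / fisherAux M a0 k)))

lemma fisherAux_pos (M a0 : ℝ) (h : 0 < a0) : ∀ k, 0 < fisherAux M a0 k
  | 0 => h
  | k + 1 => mul_pos (fisherAux_pos M a0 h k) (Real.exp_pos _)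

lemma fisherAux_anti (M a0 : ℝ) (h : 0 < a0) : ∀ {k l : ℕ}, k ≤ l →
    fisherAux M a0 l ≤ fisherAux M a0 k := by
  intro k l hkl
  induction hkl with
  | refl => exact le_rfl
  | step h' ih =>
    refine le_trans ?_ ih
    show fisherAux M a0 _ * Real.exp (-(Real.sqrt (2 * M / fisherAux M a0 _))) ≤ _
    have hp := fisherAux_pos M a0 h ‹ℕ›
    calc fisherAux M a0 _ * Real.exp (-(Real.sqrt (2 * M / fisherAux M a0 _)))
        ≤ fisherAux M a0 _ * 1 := by
          apply mul_le_mul_of_nonneg_left _ (fisherAux_pos M a0 h _).le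
          rw [Real.exp_le_one_iff]
          simpa using Real.sqrt_nonneg _
      _ = _ := mul_one _

lemma fisher_step (M a x y : ℝ) (ha : 0 < a) (hx : 0 < x) (hy : 0 < y)
    (hya : a ≤ y) (h : (Real.log x - Real.log y) ^ 2 * (x + y) / 2 ≤ M) :
    a * Real.exp (-(Real.sqrt (2 * M / a))) ≤ x := by
  have h1 : (Real.log x - Real.log y) ^ 2 ≤ 2 * M / a := by
    rw [le_div_iff₀ ha]
    nlinarith [sq_nonneg (Real.log x - Real.log y)]
  have h2 : Real.log y - Real.log x ≤ Real.sqrt (2 * M / a) := by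
    have := Real.sqrt_le_sqrt h1
    rw [Real.sqrt_sq_eq_abs] at this
    have := neg_abs_le (Real.log x - Real.log y)
    linarith
  have h3 : Real.log a - Real.sqrt (2 * M / a) ≤ Real.log x := by
    have := Real.log_le_log ha hya
    linarith
  calc a * Real.exp (-(Real.sqrt (2 * M / a)))
      = Real.exp (Real.log a - Real.sqrt (2 * M / a)) := by
        rw [sub_eq_add_neg, Real.exp_add, Real.exp_log ha]
    _ ≤ Real.exp (Real.log x) := Real.exp_le_exp.mpr h3
    _ = x := Real.exp_log hx

theorem fisher_aux_main {V : Type*} [Fintype V] [DecidableEq V] [Nonempty V]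
    (G : SimpleGraph V) [DecidableRel G.Adj] (hG : G.Connected)
    (M : ℝ) (hM : 0 < M) :
    ∃ c > 0, ∀ ρ : V → ℝ, (∀ i, 0 < ρ i) → (∑ i, ρ i = 1) →
      (∑ e ∈ G.edgeFinset,
        Sym2.lift ⟨fun i j => (Real.log (ρ i) - Real.log (ρ j)) ^ 2 * (ρ i + ρ j) / 2,
          fun i j => by ring⟩ e) ≤ M → ∀ i, c ≤ ρ i := by
  set n := Fintype.card V with hn
  have hn0 : 0 < n := Fintype.card_pos
  have ha0 : (0:ℝ) < 1 / n := by positivity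
  refine ⟨fisherAux M (1/n) n, fisherAux_pos M _ ha0 n, ?_⟩
  intro ρ hρ hsum hI i
  -- nonnegativity of each edge term
  have hterm : ∀ e ∈ G.edgeFinset,
      (0:ℝ) ≤ Sym2.lift ⟨fun i j => (Real.log (ρ i) - Real.log (ρ j)) ^ 2 * (ρ i + ρ j) / 2,
        fun i j => by ring⟩ e := by
    intro e _
    induction e using Sym2.ind with
    | _ a b =>
      simp only [Sym2.lift_mk]
      have := hρ a; have := hρ b
      positivity
  -- some vertex with ρ ≥ 1/n
  obtain ⟨i0, hi0⟩ : ∃ i0, 1 / (n:ℝ) ≤ ρ i0 := by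
    by_contra hcon
    push_neg at hcon
    have : (∑ i, ρ i) < ∑ _i : V, 1 / (n:ℝ) :=
      Finset.sum_lt_sum_of_nonempty Finset.univ_nonempty (fun i _ => hcon i)
    rw [hsum, Finset.sum_const, Finset.card_univ, nsmul_eq_mul, ← hn] at this
    rw [mul_one_div, div_self (by positivity)] at this
    exact lt_irrefl _ this
  -- propagate along walks
  have key : ∀ (j : V) (p : G.Walk j i0), fisherAux M (1/n) p.length ≤ ρ j := by
    intro j p
    induction p with
    | nil => simpa [fisherAux] using hi0
    | cons h q ih =>
      rename_i a b c
      show fisherAux M (1/n) (q.length + 1) ≤ ρ a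
      have hmem : s(a, b) ∈ G.edgeFinset := by
        rw [SimpleGraph.mem_edgeFinset, SimpleGraph.mem_edgeSet]; exact h
      have hedge : (Real.log (ρ a) - Real.log (ρ b)) ^ 2 * (ρ a + ρ b) / 2 ≤ M := by
        have := Finset.single_le_sum hterm hmem
        rw [Sym2.lift_mk] at this
        linarith
      exact fisher_step M (fisherAux M (1/n) q.length) (ρ a) (ρ b)
        (fisherAux_pos M _ ha0 _) (hρ a) (hρ b) (ih hi0) hedge
  -- finish: take a path of length < n
  obtain ⟨p⟩ := (hG i i0)
  have hlen : p.toPath.1.length ≤ n := le_of_lt (p.toPath.2.length_lt)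
  exact le_trans (fisherAux_anti M _ ha0 hlen) (key i p.toPath.1)


/-- For every `M > 0` there is a `c > 0` such that every `ρ` in the open probability
simplex with `I(ρ) ≤ M` satisfies `ρ_i ≥ c` for all `i`: sublevel sets of the discrete
Fisher information are uniformly bounded away from the boundary of the simplex. -/
theorem fisher_sublevel_bounded_away {V : Type*} [Fintype V] [DecidableEq V] [Nonempty V]
    (G : SimpleGraph V) [DecidableRel G.Adj] (hG : G.Connected)
    (M : ℝ) (hM : 0 < M) :
    ∃ c > 0, ∀ ρ : V → ℝ, (∀ i, 0 < ρ i) → (∑ i, ρ i = 1) →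
      discreteFisher G ρ ≤ M → ∀ i, c ≤ ρ i := by
  obtain ⟨c, hc, hmain⟩ := fisher_aux_main G hG M hM
  exact ⟨c, hc, fun ρ h1 h2 h3 => hmain ρ h1 h2 (by simpa [discreteFisher] using h3)⟩
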